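/- Let n ≥ 1, let · be a quasigroup operation of order n on Fin n, and let σ be a quasicomplete mapping of (Fin n, ·) with special element a, where σ̄x₁ = σ̄x₂ for distinct x₁, x₂ ∈ Fin n (here σ̄x = x·σx). Identify Fin n with the first n elements of Fin (n+1), write e for the last element of Fin (n+1), and define a binary operation ∗ on Fin (n+1) by: x∗y = x·y for x, y < n with y ≠ σx; for x < n with x ≠ x₂: x∗(σx) = e, x∗e = σ̄x, and e∗(σx) = σ̄x; x₂∗(σx₂) = σ̄x₂; x₂∗e = e; e∗(σx₂) = e; and e∗e = a. Then ∗ is a quasigroup operation of order n+1 on Fin (n+1); that is, for every b ∈ Fin (n+1) the maps x ↦ b∗x and x ↦ x∗b are bijections of Fin (n+1). (Derienko–Dudek prolongation.) -/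
import Mathlib


/-- A binary operation on `Fin m` is a quasigroup operation if all left and
right translations are bijections. -/
def IsQuasigroup {m : ℕ} (f : Fin m → Fin m → Fin m) : Prop :=
  ∀ a : Fin m, Function.Bijective (fun x => f a x) ∧ Function.Bijective (fun x => f x a)

/-- **Derienko–Dudek prolongation.**  Let `f` be a quasigroup operation of order
`n ≥ 1` on `Fin n` and `σ` a quasicomplete mapping of `(Fin n, f)`: the image of
the conjugated mapping `σ̄ x = f x (σ x)` is all of `Fin n` except the special
element `a`, and `σ̄ x₁ = σ̄ x₂` for distinct `x₁, x₂`.  Then the Derienko–Dudek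
prolongation `star` (characterized cell-by-cell by `h1`–`h8`, with `Fin n`
identified with the first `n` elements of `Fin (n+1)`, `e = Fin.last n`, and
`e ∗ e = a`) is a quasigroup operation of order `n+1` on `Fin (n+1)`. -/
theorem derienko_dudek_prolongation_isQuasigroup
    (n : ℕ) (hn : 1 ≤ n)
    (f : Fin n → Fin n → Fin n) (hf : IsQuasigroup f)
    (σ : Equiv.Perm (Fin n))
    (a : Fin n)
    (hrange : Set.range (fun x => f x (σ x)) = {a}ᶜ)
    (x₁ x₂ : Fin n) (hx12 : x₁ ≠ x₂)
    (hval : f x₁ (σ x₁) = f x₂ (σ x₂))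
    (star : Fin (n + 1) → Fin (n + 1) → Fin (n + 1))
    (h1 : ∀ x y : Fin n, y ≠ σ x →
      star x.castSucc y.castSucc = (f x y).castSucc)
    (h2 : ∀ x : Fin n, x ≠ x₂ → star x.castSucc (σ x).castSucc = Fin.last n)
    (h3 : ∀ x : Fin n, x ≠ x₂ →
      star x.castSucc (Fin.last n) = (f x (σ x)).castSucc)
    (h4 : ∀ x : Fin n, x ≠ x₂ →
      star (Fin.last n) (σ x).castSucc = (f x (σ x)).castSucc)
    (h5 : star x₂.castSucc (σ x₂).castSucc = (f x₂ (σ x₂)).castSucc)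
    (h6 : star x₂.castSucc (Fin.last n) = Fin.last n)
    (h7 : star (Fin.last n) (σ x₂).castSucc = Fin.last n)
    (h8 : star (Fin.last n) (Fin.last n) = a.castSucc) :
    IsQuasigroup star := by
  -- helper: for every d ≠ a there is x ≠ x₂ with f x (σ x) = d
  have hpre : ∀ d : Fin n, d ≠ a → ∃ x, x ≠ x₂ ∧ f x (σ x) = d := by
    intro d hd
    have hmem : d ∈ Set.range (fun x => f x (σ x)) := by
      rw [hrange]; exact hd
    obtain ⟨x, hx⟩ := hmem
    by_cases h : x = x₂
    · exact ⟨x₁, hx12, by rw [hval, ← h]; exact hx⟩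
    · exact ⟨x, h, hx⟩
  -- left translation by a non-last, non-x₂ element
  have surjL : ∀ c : Fin n, c ≠ x₂ → Function.Surjective (fun y => star c.castSucc y) := by
    intro c hc b
    induction b using Fin.lastCases with
    | last => exact ⟨(σ c).castSucc, h2 c hc⟩
    | cast d =>
      by_cases hd : d = f c (σ c)
      · exact ⟨Fin.last n, by simpa [hd] using h3 c hc⟩
      · obtain ⟨y, hy⟩ := (hf c).1.surjective d
        have hyne : y ≠ σ c := fun h => hd (by rw [← hy, h])
        exact ⟨y.castSucc, by simp only [h1 c y hyne, hy]⟩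
  have surjL2 : Function.Surjective (fun y => star x₂.castSucc y) := by
    intro b
    induction b using Fin.lastCases with
    | last => exact ⟨Fin.last n, h6⟩
    | cast d =>
      obtain ⟨y, hy⟩ := (hf x₂).1.surjective d
      by_cases hy2 : y = σ x₂
      · exact ⟨y.castSucc, by rw [hy2] at hy ⊢; simp only [h5, hy]⟩
      · exact ⟨y.castSucc, by simp only [h1 x₂ y hy2, hy]⟩
  have surjLlast : Function.Surjective (fun y => star (Fin.last n) y) := by
    intro b
    induction b using Fin.lastCases with
    | last => exact ⟨(σ x₂).castSucc, h7⟩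
    | cast d =>
      by_cases hd : d = a
      · exact ⟨Fin.last n, by simpa [hd] using h8⟩
      · obtain ⟨x, hx2, hx⟩ := hpre d hd
        exact ⟨(σ x).castSucc, by simp only [h4 x hx2, hx]⟩
  have surjRlast : Function.Surjective (fun y => star y (Fin.last n)) := by
    intro b
    induction b using Fin.lastCases with
    | last => exact ⟨x₂.castSucc, h6⟩
    | cast d =>
      by_cases hd : d = a
      · exact ⟨Fin.last n, by simpa [hd] using h8⟩
      · obtain ⟨x, hx2, hx⟩ := hpre d hd
        exact ⟨x.castSucc, by simp only [h3 x hx2, hx]⟩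
  have surjR : ∀ c : Fin n, Function.Surjective (fun y => star y c.castSucc) := by
    intro c b
    set x₀ := σ.symm c with hx₀
    have hσ : σ x₀ = c := σ.apply_symm_apply c
    by_cases hc2 : x₀ = x₂
    · -- c = σ x₂
      have hcc : σ x₂ = c := by rw [← hc2, hσ]
      induction b using Fin.lastCases with
      | last => exact ⟨Fin.last n, by rw [← hcc]; exact h7⟩
      | cast d =>
        obtain ⟨x, hx⟩ := (hf c).2.surjective d
        by_cases hx2 : x = x₂
        · refine ⟨x₂.castSucc, ?_⟩
          show star x₂.castSucc c.castSucc = d.castSucc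
          rw [← hcc, h5, hcc, ← hx2]
          exact congrArg Fin.castSucc hx
        · have hne : c ≠ σ x := by
            intro h
            exact hx2 (by rw [← hc2, hx₀, h, Equiv.symm_apply_apply])
          exact ⟨x.castSucc, by simp only [h1 x c hne, hx]⟩
    · induction b using Fin.lastCases with
      | last => exact ⟨x₀.castSucc, by rw [← hσ]; exact h2 x₀ hc2⟩
      | cast d =>
        by_cases hd : d = f x₀ (σ x₀)
        · refine ⟨Fin.last n, ?_⟩
          have := h4 x₀ hc2
          rw [hσ] at this
          show star (Fin.last n) c.castSucc = d.castSucc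
          rw [this, hd, hσ]
        · obtain ⟨x, hx⟩ := (hf c).2.surjective d
          have hne : c ≠ σ x := by
            intro h
            apply hd
            have hxx : x = x₀ := by rw [hx₀, h, Equiv.symm_apply_apply]
            rw [← hx, hxx, hσ]
          exact ⟨x.castSucc, by simp only [h1 x c hne, hx]⟩
  intro b
  induction b using Fin.lastCases with
  | last =>
    exact ⟨Finite.surjective_iff_bijective.mp surjLlast,
           Finite.surjective_iff_bijective.mp surjRlast⟩
  | cast c =>
    refine ⟨?_, Finite.surjective_iff_bijective.mp (surjR c)⟩
    by_cases hc : c = x₂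
    · subst hc; exact Finite.surjective_iff_bijective.mp surjL2
    · exact Finite.surjective_iff_bijective.mp (surjL c hc)
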